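/- arXiv:1705.03316 — 5 statements merged into one kernel-verified Lean document; each statement's English description precedes it below -/
import Mathlib

section
/- Let G be a finite abelian group with |G| = m and let A ⊆ G. If R_A(g) ≤ 5 for all g ∈ G, then the number of elements g ∈ G with R_A(g) = 0 satisfies |S_0| ≥ (1/4)m − √(5m). -/
/-- `repFn A g` is the number of ordered pairs `(a, a') ∈ A × A` with `a + a' = g`. -/
def repFn {G : Type*} [AddCommGroup G] [DecidableEq G] (A : Finset G) (g : G) : ℕ :=
  ((A ×ˢ A).filter fun p => p.1 + p.2 = g).card

namespace StmtAux

open Finset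

variable {G : Type*} [AddCommGroup G] [Fintype G] [DecidableEq G]

/-- number of ordered pairs with difference `y` -/
def dFn (A : Finset G) (y : G) : ℕ :=
  ((A ×ˢ A).filter fun p => p.1 - p.2 = y).card

lemma sum_repFn (A : Finset G) : ∑ g : G, repFn A g = A.card ^ 2 := by
  rw [sq, ← Finset.card_product]
  exact (Finset.card_eq_sum_card_fiberwise
    (f := fun p : G × G => p.1 + p.2) (t := Finset.univ)
    (fun x _ => Finset.mem_univ _)).symm

lemma sum_dFn (A : Finset G) : ∑ y : G, dFn A y = A.card ^ 2 := by
  rw [sq, ← Finset.card_product]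
  exact (Finset.card_eq_sum_card_fiberwise
    (f := fun p : G × G => p.1 - p.2) (t := Finset.univ)
    (fun x _ => Finset.mem_univ _)).symm

lemma dFn_zero (A : Finset G) : dFn A 0 = A.card := by
  unfold dFn
  have he : ((A ×ˢ A).filter fun p => p.1 - p.2 = 0) = A.image (fun a => (a, a)) := by
    ext ⟨x, y⟩
    simp only [Finset.mem_filter, Finset.mem_product, Finset.mem_image, sub_eq_zero,
      Prod.mk.injEq]
    constructor
    · rintro ⟨⟨hx, _⟩, rfl⟩; exact ⟨x, hx, rfl, rfl⟩
    · rintro ⟨a, ha, rfl, rfl⟩; exact ⟨⟨ha, ha⟩, rfl⟩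
  rw [he, Finset.card_image_of_injective]
  intro a b hab
  simpa using hab

/-- quadruples with equal sums -/
def QS (A : Finset G) : Finset ((G × G) × (G × G)) :=
  ((A ×ˢ A) ×ˢ (A ×ˢ A)).filter fun pq => pq.1.1 + pq.1.2 = pq.2.1 + pq.2.2

/-- quadruples with equal differences -/
def QD (A : Finset G) : Finset ((G × G) × (G × G)) :=
  ((A ×ˢ A) ×ˢ (A ×ˢ A)).filter fun pq => pq.1.1 - pq.1.2 = pq.2.1 - pq.2.2

lemma sum_repFn_sq (A : Finset G) : ∑ g : G, (repFn A g) ^ 2 = (QS A).card := by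
  rw [Finset.card_eq_sum_card_fiberwise
    (f := fun pq : (G × G) × (G × G) => pq.1.1 + pq.1.2) (t := Finset.univ)
    (fun x _ => Finset.mem_univ _)]
  refine Finset.sum_congr rfl fun g _ => ?_
  have h1 : ((QS A).filter fun pq => pq.1.1 + pq.1.2 = g)
      = ((A ×ˢ A).filter fun p => p.1 + p.2 = g) ×ˢ ((A ×ˢ A).filter fun p => p.1 + p.2 = g) := by
    ext ⟨⟨a, b⟩, ⟨c, d⟩⟩
    simp only [QS, Finset.mem_filter, Finset.mem_product]
    constructor
    · rintro ⟨⟨⟨⟨ha, hb⟩, hc, hd⟩, heq⟩, hg⟩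
      exact ⟨⟨⟨ha, hb⟩, hg⟩, ⟨hc, hd⟩, by rw [← heq]; exact hg⟩
    · rintro ⟨⟨⟨ha, hb⟩, hg⟩, ⟨hc, hd⟩, hg2⟩
      exact ⟨⟨⟨⟨ha, hb⟩, hc, hd⟩, hg.trans hg2.symm⟩, hg⟩
  rw [h1, Finset.card_product, repFn, sq]

lemma sum_dFn_sq (A : Finset G) : ∑ y : G, (dFn A y) ^ 2 = (QD A).card := by
  rw [Finset.card_eq_sum_card_fiberwise
    (f := fun pq : (G × G) × (G × G) => pq.1.1 - pq.1.2) (t := Finset.univ)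
    (fun x _ => Finset.mem_univ _)]
  refine Finset.sum_congr rfl fun y _ => ?_
  have h1 : ((QD A).filter fun pq => pq.1.1 - pq.1.2 = y)
      = ((A ×ˢ A).filter fun p => p.1 - p.2 = y) ×ˢ ((A ×ˢ A).filter fun p => p.1 - p.2 = y) := by
    ext ⟨⟨a, b⟩, ⟨c, d⟩⟩
    simp only [QD, Finset.mem_filter, Finset.mem_product]
    constructor
    · rintro ⟨⟨⟨⟨ha, hb⟩, hc, hd⟩, heq⟩, hg⟩
      exact ⟨⟨⟨ha, hb⟩, hg⟩, ⟨hc, hd⟩, by rw [← heq]; exact hg⟩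
    · rintro ⟨⟨⟨ha, hb⟩, hg⟩, ⟨hc, hd⟩, hg2⟩
      exact ⟨⟨⟨⟨ha, hb⟩, hc, hd⟩, hg.trans hg2.symm⟩, hg⟩
  rw [h1, Finset.card_product, dFn, sq]

lemma card_QS_eq_card_QD (A : Finset G) : (QS A).card = (QD A).card := by
  refine Finset.card_bij' (fun pq _ => ((pq.1.1, pq.2.1), (pq.2.2, pq.1.2)))
    (fun pq _ => ((pq.1.1, pq.2.2), (pq.1.2, pq.2.1))) ?_ ?_ ?_ ?_
  · rintro ⟨⟨a, b⟩, ⟨c, d⟩⟩ hmem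
    simp only [QS, QD, Finset.mem_filter, Finset.mem_product] at hmem ⊢
    obtain ⟨⟨⟨ha, hb⟩, hc, hd⟩, heq⟩ := hmem
    refine ⟨⟨⟨ha, hc⟩, hd, hb⟩, ?_⟩
    show a - c = d - b
    rw [sub_eq_sub_iff_add_eq_add, heq]
    exact add_comm c d
  · rintro ⟨⟨p, q⟩, ⟨r, s⟩⟩ hmem
    simp only [QS, QD, Finset.mem_filter, Finset.mem_product] at hmem ⊢
    obtain ⟨⟨⟨hp, hq⟩, hr, hs⟩, heq⟩ := hmem
    refine ⟨⟨⟨hp, hs⟩, hq, hr⟩, ?_⟩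
    show p + s = q + r
    rw [sub_eq_sub_iff_add_eq_add] at heq
    rw [heq]
    exact add_comm r q
  · rintro ⟨⟨a, b⟩, ⟨c, d⟩⟩ _; rfl
  · rintro ⟨⟨p, q⟩, ⟨r, s⟩⟩ _; rfl

/-- an involution without fixed points on a finset gives even cardinality -/
lemma even_card_of_invol {α : Type*} [DecidableEq α] (f : α → α) (s : Finset α)
    (h1 : ∀ x ∈ s, f x ∈ s) (h2 : ∀ x ∈ s, f (f x) = x) (h3 : ∀ x ∈ s, f x ≠ x) :
    Even s.card := by
  induction s using Finset.strongInduction with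
  | _ s ih =>
    rcases s.eq_empty_or_nonempty with rfl | ⟨x, hx⟩
    · simp
    · have hfx : f x ∈ s := h1 x hx
      have hne : f x ≠ x := h3 x hx
      have hfxe : f x ∈ s.erase x := Finset.mem_erase.mpr ⟨hne, hfx⟩
      set t := (s.erase x).erase (f x) with ht
      have htsub : t ⊂ s :=
        lt_of_le_of_lt (Finset.erase_subset _ _) (Finset.erase_ssubset hx)
      have hts : ∀ y ∈ t, y ∈ s := fun y hy => Finset.mem_of_mem_erase
        (Finset.mem_of_mem_erase hy)
      have hmem : ∀ y ∈ t, f y ∈ t := by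
        intro y hy
        have hys : y ∈ s := hts y hy
        have hy1 : y ≠ f x := (Finset.mem_erase.mp hy).1
        have hy2 : y ≠ x := (Finset.mem_erase.mp (Finset.mem_of_mem_erase hy)).1
        refine Finset.mem_erase.mpr ⟨?_, Finset.mem_erase.mpr ⟨?_, h1 y hys⟩⟩
        · intro hcon
          exact hy2 (by rw [← h2 y hys, hcon, h2 x hx])
        · intro hcon
          exact hy1 (by rw [← h2 y hys, hcon])
      have heven := ih t htsub (fun y hy => hmem y hy)
        (fun y hy => h2 y (hts y hy)) (fun y hy => h3 y (hts y hy))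
      have hcard : s.card = t.card + 2 := by
        have c1 : (s.erase x).card = s.card - 1 := Finset.card_erase_of_mem hx
        have c2 : t.card = (s.erase x).card - 1 := Finset.card_erase_of_mem hfxe
        have hpos : 0 < s.card := Finset.card_pos.mpr ⟨x, hx⟩
        have hpos2 : 0 < (s.erase x).card := Finset.card_pos.mpr ⟨f x, hfxe⟩
        omega
      rcases heven with ⟨n, hn⟩
      exact ⟨n + 1, by omega⟩

lemma odd_repFn_mem (A : Finset G) (g : G) (hodd : Odd (repFn A g)) :
    ∃ a ∈ A, a + a = g := by
  by_contra hcon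
  push_neg at hcon
  have : Even (repFn A g) := by
    refine even_card_of_invol (fun p => (p.2, p.1)) _ ?_ ?_ ?_
    · rintro ⟨a, b⟩ hp
      simp only [Finset.mem_filter, Finset.mem_product] at hp ⊢
      exact ⟨⟨hp.1.2, hp.1.1⟩, by rw [add_comm]; exact hp.2⟩
    · rintro ⟨a, b⟩ _; rfl
    · rintro ⟨a, b⟩ hp hcon2
      simp only [Finset.mem_filter, Finset.mem_product] at hp
      have hab : b = a := congrArg Prod.fst hcon2
      exact hcon a hp.1.1 (by rw [← hp.2, hab])
  exact (Nat.not_odd_iff_even.mpr this) hodd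

lemma odd_card_le (A : Finset G) :
    (Finset.univ.filter fun g : G => Odd (repFn A g)).card ≤ A.card := by
  have hsub : (Finset.univ.filter fun g : G => Odd (repFn A g))
      ⊆ A.image (fun a => a + a) := by
    intro g hg
    have hodd := (Finset.mem_filter.mp hg).2
    obtain ⟨a, ha, hag⟩ := odd_repFn_mem A g hodd
    exact Finset.mem_image.mpr ⟨a, ha, hag⟩
  exact le_trans (Finset.card_le_card hsub) (Finset.card_image_le)

lemma pointwise_main (n : ℕ) (hn : n ≤ 5) :
    8 + n ^ 2 ≤ 8 * (if n = 0 then 1 else 0) + 6 * n + 3 * (if Odd n then 1 else 0) := by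
  interval_cases n <;> decide

lemma pointwise_diff (n : ℕ) : 5 * n ≤ n ^ 2 + 6 := by
  rcases le_or_gt n 2 with hn | hn
  · interval_cases n <;> norm_num
  · have h3 : (3 : ℤ) ≤ (n : ℤ) := by exact_mod_cast hn
    have := mul_nonneg (by linarith : (0:ℤ) ≤ (n:ℤ) - 2) (by linarith : (0:ℤ) ≤ (n:ℤ) - 3)
    zify
    nlinarith

end StmtAux

theorem stmt_0 {G : Type*} [AddCommGroup G] [Fintype G] [DecidableEq G]
    (m : ℕ) (hm : Fintype.card G = m) (A : Finset G)
    (h : ∀ g : G, repFn A g ≤ 5) :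
    (((Finset.univ.filter fun g : G => repFn A g = 0).card : ℝ)) ≥
      (1 / 4 : ℝ) * m - Real.sqrt (5 * m) := by
  classical
  open StmtAux in
  subst hm
  set m := Fintype.card G with hm
  set k := A.card with hk
  set t0 := (Finset.univ.filter fun g : G => repFn A g = 0).card with ht0
  set q := (Finset.univ.filter fun g : G => Odd (repFn A g)).card with hq
  -- main summed inequality
  have hmain : 8 * m + ∑ g : G, (repFn A g) ^ 2 ≤ 8 * t0 + 6 * k ^ 2 + 3 * q := by
    have hsum : ∑ g : G, (8 + (repFn A g) ^ 2)
        ≤ ∑ g : G, (8 * (if repFn A g = 0 then 1 else 0) + 6 * (repFn A g)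
            + 3 * (if Odd (repFn A g) then 1 else 0)) :=
      Finset.sum_le_sum fun g _ => StmtAux.pointwise_main _ (h g)
    have hL : ∑ g : G, (8 + (repFn A g) ^ 2) = 8 * m + ∑ g : G, (repFn A g) ^ 2 := by
      rw [Finset.sum_add_distrib, Finset.sum_const, Finset.card_univ, smul_eq_mul, hm]
      ring
    have hR : ∑ g : G, (8 * (if repFn A g = 0 then 1 else 0) + 6 * (repFn A g)
            + 3 * (if Odd (repFn A g) then 1 else 0))
        = 8 * t0 + 6 * k ^ 2 + 3 * q := by
      rw [Finset.sum_add_distrib, Finset.sum_add_distrib, ← Finset.mul_sum,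
        ← Finset.mul_sum, ← Finset.mul_sum, StmtAux.sum_repFn, Finset.sum_boole,
        Finset.sum_boole]
      push_cast
      rw [ht0, hq, hk]
    rw [hL, hR] at hsum
    exact hsum
  -- difference side
  have hE : ∑ g : G, (repFn A g) ^ 2 = ∑ y : G, (dFn A y) ^ 2 := by
    rw [StmtAux.sum_repFn_sq, StmtAux.sum_dFn_sq, StmtAux.card_QS_eq_card_QD]
  have hsplit1 : dFn A 0 + ∑ y ∈ Finset.univ.erase 0, dFn A y = ∑ y : G, dFn A y :=
    Finset.add_sum_erase Finset.univ (fun y => dFn A y) (Finset.mem_univ (0 : G))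
  have hsplit2 : (dFn A 0) ^ 2 + ∑ y ∈ Finset.univ.erase 0, (dFn A y) ^ 2
      = ∑ y : G, (dFn A y) ^ 2 :=
    Finset.add_sum_erase Finset.univ (fun y => (dFn A y) ^ 2) (Finset.mem_univ (0 : G))
  have hM : (Finset.univ.erase (0 : G)).card + 1 = m := by
    rw [Finset.card_erase_of_mem (Finset.mem_univ 0), Finset.card_univ]
    have : 0 < m := Fintype.card_pos
    omega
  have hdiffsum : ∑ y ∈ Finset.univ.erase 0, dFn A y + k = k ^ 2 := by
    have h1 := StmtAux.sum_dFn A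
    rw [← hsplit1, StmtAux.dFn_zero, ← hk] at h1
    omega
  have hdiff : 5 * (∑ y ∈ Finset.univ.erase 0, dFn A y)
      ≤ (∑ y ∈ Finset.univ.erase 0, (dFn A y) ^ 2)
        + 6 * (Finset.univ.erase (0 : G)).card := by
    calc 5 * (∑ y ∈ Finset.univ.erase 0, dFn A y)
        = ∑ y ∈ Finset.univ.erase 0, 5 * dFn A y := by rw [Finset.mul_sum]
      _ ≤ ∑ y ∈ Finset.univ.erase 0, ((dFn A y) ^ 2 + 6) :=
          Finset.sum_le_sum fun y _ => StmtAux.pointwise_diff _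
      _ = (∑ y ∈ Finset.univ.erase 0, (dFn A y) ^ 2)
            + 6 * (Finset.univ.erase (0 : G)).card := by
          rw [Finset.sum_add_distrib, Finset.sum_const, smul_eq_mul, mul_comm]
  have hq_le : q ≤ k := StmtAux.odd_card_le A
  have hk5 : k ^ 2 ≤ 5 * m := by
    rw [← StmtAux.sum_repFn A]
    calc ∑ g : G, repFn A g ≤ ∑ _g : G, 5 := Finset.sum_le_sum fun g _ => h g
      _ = 5 * m := by rw [Finset.sum_const, Finset.card_univ, smul_eq_mul, mul_comm]
  have hd0 : dFn A 0 = k := StmtAux.dFn_zero A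
  -- derive the key inequality over ℕ
  have hkey : 2 * m ≤ 8 * t0 + 8 * k := by
    have e1 : (dFn A 0) ^ 2 = k ^ 2 := by rw [hd0]
    -- set abbreviations for omega
    set E := ∑ g : G, (repFn A g) ^ 2 with hEdef
    set E' := ∑ y ∈ Finset.univ.erase (0 : G), (dFn A y) ^ 2 with hE'
    set S' := ∑ y ∈ Finset.univ.erase (0 : G), dFn A y with hS'
    set M := (Finset.univ.erase (0 : G)).card with hMdef
    set K2 := k ^ 2 with hK2
    have f1 : 8 * m + E ≤ 8 * t0 + 6 * K2 + 3 * q := hmain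
    have f2 : E = K2 + E' := by
      rw [hE, ← hsplit2, e1]
    have f3 : 5 * S' ≤ E' + 6 * M := hdiff
    have f4 : S' + k = K2 := hdiffsum
    have f5 : M + 1 = m := hM
    omega
  -- pass to the reals
  have hkR : (k : ℝ) ≤ Real.sqrt (5 * m) := by
    have h2 : ((k : ℝ)) ^ 2 ≤ 5 * (m : ℝ) := by exact_mod_cast hk5
    calc (k : ℝ) = Real.sqrt ((k : ℝ) ^ 2) := (Real.sqrt_sq (by positivity)).symm
      _ ≤ Real.sqrt (5 * m) := Real.sqrt_le_sqrt h2
  have hkeyR : 2 * (m : ℝ) ≤ 8 * t0 + 8 * k := by exact_mod_cast hkey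
  have : (1 / 4 : ℝ) * m - (k : ℝ) ≤ t0 := by linarith
  linarith
end

section
/- Let G be a finite abelian group with |G| = m and let A ⊆ G. If R_A(g) ≤ 5 for all g ∈ G, then the number of elements g ∈ G with R_A(g) = 0 satisfies |S_0| ≥ (1/4)m − |A| + 3/4. -/
set_option linter.unusedSectionVars false

/-- The difference representation function. -/
private def diffFn {G : Type*} [AddCommGroup G] [DecidableEq G] (A : Finset G) (u : G) : ℕ :=
  ((A ×ˢ A).filter fun p => p.1 - p.2 = u).card

section aux

variable {G : Type*} [AddCommGroup G] [Fintype G] [DecidableEq G]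

private lemma sum_repFn (A : Finset G) : ∑ g : G, repFn A g = A.card ^ 2 := by
  rw [sq, ← Finset.card_product]
  exact (Finset.card_eq_sum_card_fiberwise (fun x _ => Finset.mem_univ _)).symm

private lemma sum_diffFn (A : Finset G) : ∑ u : G, diffFn A u = A.card ^ 2 := by
  rw [sq, ← Finset.card_product]
  exact (Finset.card_eq_sum_card_fiberwise (fun x _ => Finset.mem_univ _)).symm

private lemma diffFn_zero (A : Finset G) : diffFn A 0 = A.card := by
  unfold diffFn
  symm
  refine Finset.card_bij (fun a _ => (a, a)) ?_ ?_ ?_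
  · intro a ha
    simp [Finset.mem_filter, Finset.mem_product, ha]
  · intro a₁ h₁ a₂ h₂ hEq
    simpa using congrArg Prod.fst hEq
  · intro p hp
    simp only [Finset.mem_filter, Finset.mem_product] at hp
    obtain ⟨⟨h1, h2⟩, h3⟩ := hp
    have hpp : p.1 = p.2 := sub_eq_zero.mp h3
    exact ⟨p.1, h1, by rw [Prod.ext_iff]; exact ⟨rfl, hpp⟩⟩

private lemma sum_sq_fiber (A : Finset G) (F : G × G → G) :
    ∑ g : G, ((A ×ˢ A).filter fun p => F p = g).card ^ 2 =
      (((A ×ˢ A) ×ˢ (A ×ˢ A)).filter fun q => F q.1 = F q.2).card := by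
  rw [Finset.card_eq_sum_card_fiberwise
    (f := fun q : (G × G) × (G × G) => F q.1) (t := Finset.univ) (fun x _ => Finset.mem_univ _)]
  refine Finset.sum_congr rfl fun g _ => ?_
  have hset : ((((A ×ˢ A) ×ˢ (A ×ˢ A)).filter fun q => F q.1 = F q.2).filter
      fun q => F q.1 = g) =
      ((A ×ˢ A).filter fun p => F p = g) ×ˢ ((A ×ˢ A).filter fun p => F p = g) := by
    ext q
    simp only [Finset.mem_filter, Finset.mem_product]
    constructor
    · rintro ⟨⟨⟨hq1, hq2⟩, hFF⟩, hFg⟩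
      exact ⟨⟨hq1, hFg⟩, hq2, by rw [← hFF]; exact hFg⟩
    · rintro ⟨⟨hq1, hFg1⟩, hq2, hFg2⟩
      exact ⟨⟨⟨hq1, hq2⟩, by rw [hFg1, hFg2]⟩, hFg1⟩
  rw [hset, Finset.card_product, sq]

private lemma energy_eq (A : Finset G) :
    ∑ g : G, (repFn A g) ^ 2 = ∑ u : G, (diffFn A u) ^ 2 := by
  unfold repFn diffFn
  rw [sum_sq_fiber A (fun p => p.1 + p.2), sum_sq_fiber A (fun p => p.1 - p.2)]
  refine Finset.card_bij (fun q _ => ((q.1.1, q.2.2), (q.2.1, q.1.2))) ?_ ?_ ?_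
  · intro q hq
    simp only [Finset.mem_filter, Finset.mem_product] at hq ⊢
    obtain ⟨⟨⟨h1, h2⟩, h3, h4⟩, h5⟩ := hq
    refine ⟨⟨⟨h1, h4⟩, h3, h2⟩, ?_⟩
    rw [sub_eq_sub_iff_add_eq_add]
    exact h5
  · intro q₁ h₁ q₂ h₂ hEq
    simp only [Prod.ext_iff] at hEq ⊢
    obtain ⟨⟨e1, e2⟩, e3, e4⟩ := hEq
    exact ⟨⟨e1, e4⟩, e3, e2⟩
  · intro q hq
    simp only [Finset.mem_filter, Finset.mem_product] at hq
    obtain ⟨⟨⟨h1, h2⟩, h3, h4⟩, h5⟩ := hq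
    refine ⟨((q.1.1, q.2.2), (q.2.1, q.1.2)), ?_, ?_⟩
    · simp only [Finset.mem_filter, Finset.mem_product]
      refine ⟨⟨⟨h1, h4⟩, h3, h2⟩, ?_⟩
      rw [← sub_eq_sub_iff_add_eq_add]
      exact h5
    · simp [Prod.ext_iff]

private lemma odd_repFn_mem (A : Finset G) (g : G) (hodd : Odd (repFn A g)) :
    ∃ x ∈ A, x + x = g := by
  by_contra hno
  push_neg at hno
  have hsum0 : (∑ _p ∈ (A ×ˢ A).filter (fun p => p.1 + p.2 = g), (1 : ZMod 2)) = 0 := by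
    refine Finset.sum_involution (fun p _ => (p.2, p.1)) ?_ ?_ ?_ ?_
    · intro p hp; decide
    · intro p hp hne hswap
      have h12 : p.1 = p.2 := congrArg Prod.snd hswap
      simp only [Finset.mem_filter, Finset.mem_product] at hp
      exact hno p.1 hp.1.1 (by rw [h12] at hp ⊢; exact hp.2)
    · intro p hp
      simp only [Finset.mem_filter, Finset.mem_product] at hp ⊢
      exact ⟨⟨hp.1.2, hp.1.1⟩, by rw [add_comm]; exact hp.2⟩
    · intro p hp; rfl
  rw [Finset.sum_const, nsmul_eq_mul, mul_one] at hsum0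
  have hdvd : (2 : ℕ) ∣ repFn A g := (ZMod.natCast_eq_zero_iff _ 2).mp hsum0
  rw [Nat.odd_iff] at hodd
  omega

private lemma odd_card_le (A : Finset G) :
    (Finset.univ.filter fun g : G => Odd (repFn A g)).card ≤ A.card := by
  calc (Finset.univ.filter fun g : G => Odd (repFn A g)).card
      ≤ (A.image fun x => x + x).card := by
        apply Finset.card_le_card
        intro g hg
        simp only [Finset.mem_filter] at hg
        obtain ⟨x, hx, hxg⟩ := odd_repFn_mem A g hg.2
        exact Finset.mem_image.mpr ⟨x, hx, hxg⟩
    _ ≤ A.card := Finset.card_image_le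

private lemma pointwise_ineq (n : ℕ) (hn : n ≤ 5) :
    8 * (if n = 0 then 0 else 1) + n ^ 2 ≤ 6 * n + 3 * (if Odd n then 1 else 0) := by
  interval_cases n <;> decide

end aux

theorem stmt_1 {G : Type*} [AddCommGroup G] [Fintype G] [DecidableEq G]
    (m : ℕ) (hm : Fintype.card G = m) (A : Finset G)
    (h : ∀ g : G, repFn A g ≤ 5) :
    (((Finset.univ.filter fun g : G => repFn A g = 0).card : ℝ)) ≥
      (1 / 4 : ℝ) * m - A.card + 3 / 4 := by
  classical
  set a := A.card with ha
  set n₀ := (Finset.univ.filter fun g : G => repFn A g = 0).card with hn₀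
  set t := (Finset.univ.filter fun g : G => ¬ repFn A g = 0).card with ht
  have hn₀t : n₀ + t = m := by
    rw [hn₀, ht, Finset.card_filter_add_card_filter_not, Finset.card_univ, hm]
  have hm1 : 1 ≤ m := by
    rw [← hm]
    exact Fintype.card_pos
  -- summed pointwise inequality
  have hsum : 8 * t + ∑ g : G, (repFn A g) ^ 2 ≤
      6 * a ^ 2 + 3 * (Finset.univ.filter fun g : G => Odd (repFn A g)).card := by
    have hs := Finset.sum_le_sum (s := (Finset.univ : Finset G))
      (f := fun g => 8 * (if repFn A g = 0 then 0 else 1) + (repFn A g) ^ 2)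
      (g := fun g => 6 * (repFn A g) + 3 * (if Odd (repFn A g) then 1 else 0))
      (fun g _ => pointwise_ineq (repFn A g) (h g))
    rw [Finset.sum_add_distrib, Finset.sum_add_distrib, ← Finset.mul_sum, ← Finset.mul_sum,
      ← Finset.mul_sum] at hs
    have h1 : (∑ g : G, (if repFn A g = 0 then (0 : ℕ) else 1)) = t := by
      calc (∑ g : G, (if repFn A g = 0 then (0 : ℕ) else 1))
          = ∑ g : G, (if ¬ repFn A g = 0 then (1 : ℕ) else 0) := by
            refine Finset.sum_congr rfl fun g _ => ?_
            by_cases hg : repFn A g = 0 <;> simp [hg]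
        _ = t := by rw [Finset.sum_boole, ht, Nat.cast_id]
    have h2 : (∑ g : G, (if Odd (repFn A g) then (1 : ℕ) else 0)) =
        (Finset.univ.filter fun g : G => Odd (repFn A g)).card := by
      rw [Finset.sum_boole, Nat.cast_id]
    rw [h1, h2, sum_repFn] at hs
    exact hs
  have hOdd := odd_card_le A
  have h8 : 8 * t + (∑ g : G, (repFn A g) ^ 2) ≤ 6 * a ^ 2 + 3 * a := by
    calc 8 * t + ∑ g : G, (repFn A g) ^ 2
        ≤ 6 * a ^ 2 + 3 * (Finset.univ.filter fun g : G => Odd (repFn A g)).card := hsum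
      _ ≤ 6 * a ^ 2 + 3 * a := by
          have := hOdd
          omega
  -- energy lower bound via differences
  have hdiff : ((∑ g : G, (repFn A g) ^ 2 : ℕ) : ℤ) ≥
      6 * (a : ℤ) ^ 2 - 5 * a - 6 * m + 6 := by
    rw [energy_eq]
    have h0univ : (0 : G) ∈ (Finset.univ : Finset G) := Finset.mem_univ 0
    have hsplit : (∑ u ∈ Finset.univ.erase (0 : G), diffFn A u) + diffFn A 0
        = ∑ u : G, diffFn A u := Finset.sum_erase_add _ _ h0univ
    have hsplit2 : (∑ u ∈ Finset.univ.erase (0 : G), (diffFn A u) ^ 2) + (diffFn A 0) ^ 2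
        = ∑ u : G, (diffFn A u) ^ 2 := Finset.sum_erase_add _ _ h0univ
    have hcard : (Finset.univ.erase (0 : G)).card = m - 1 := by
      rw [Finset.card_erase_of_mem h0univ, Finset.card_univ, hm]
    rw [diffFn_zero, sum_diffFn] at hsplit
    have hDsum : (∑ u ∈ Finset.univ.erase (0 : G), (diffFn A u : ℤ)) = (a : ℤ) ^ 2 - a := by
      have hc := congrArg (Nat.cast : ℕ → ℤ) hsplit
      push_cast at hc ⊢
      linarith
    have hnn : (0 : ℤ) ≤ ∑ u ∈ Finset.univ.erase (0 : G),
        (((diffFn A u : ℤ)) - 2) * (((diffFn A u : ℤ)) - 3) := by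
      apply Finset.sum_nonneg
      intro u _
      rcases le_or_gt ((diffFn A u : ℤ)) 2 with hc | hc
      · nlinarith
      · nlinarith
    have hexp : (∑ u ∈ Finset.univ.erase (0 : G),
        (((diffFn A u : ℤ)) - 2) * (((diffFn A u : ℤ)) - 3))
        = (∑ u ∈ Finset.univ.erase (0 : G), ((diffFn A u : ℤ)) ^ 2)
          - 5 * (∑ u ∈ Finset.univ.erase (0 : G), ((diffFn A u : ℤ)))
          + 6 * ((Finset.univ.erase (0 : G)).card : ℤ) := by
      rw [Finset.sum_congr rfl (fun u _ => by ring :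
        ∀ u ∈ Finset.univ.erase (0 : G), (((diffFn A u : ℤ)) - 2) * (((diffFn A u : ℤ)) - 3)
          = ((diffFn A u : ℤ)) ^ 2 - 5 * ((diffFn A u : ℤ)) + 6)]
      rw [Finset.sum_add_distrib, Finset.sum_sub_distrib, ← Finset.mul_sum, Finset.sum_const,
        nsmul_eq_mul]
      ring
    rw [hexp, hDsum, hcard] at hnn
    have hcastm : ((m - 1 : ℕ) : ℤ) = (m : ℤ) - 1 := by omega
    rw [hcastm] at hnn
    have hsq : ((∑ u : G, (diffFn A u) ^ 2 : ℕ) : ℤ)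
        = (∑ u ∈ Finset.univ.erase (0 : G), ((diffFn A u : ℤ)) ^ 2) + (a : ℤ) ^ 2 := by
      rw [← hsplit2]
      push_cast [diffFn_zero]
      ring
    rw [hsq]
    linarith
  -- assemble in ℤ
  have h8' : (8 : ℤ) * t + ((∑ g : G, (repFn A g) ^ 2 : ℕ) : ℤ) ≤ 6 * (a : ℤ) ^ 2 + 3 * a := by
    have hc := (Nat.cast_le (α := ℤ)).mpr h8
    push_cast at hc ⊢
    linarith
  have hfinal : (8 : ℤ) * n₀ ≥ 2 * m - 8 * a + 6 := by
    have h2 : (n₀ : ℤ) + t = m := by exact_mod_cast hn₀t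
    linarith
  have hcR : ((8 * (n₀ : ℝ))) ≥ ((2 * (m : ℝ) - 8 * a + 6)) := by
    have := hfinal
    exact_mod_cast this
  linarith
end

section
/- Let p be a prime and m = p² + p + 1. Then there exists a subset A ⊆ ℤ_m such that R_A(n) ≤ 2 for all n ∈ ℤ_m and the number of elements n ∈ ℤ_m with R_A(n) = 2 satisfies |S_2| = (1/2)m − 1/2. -/
open Polynomial IntermediateField

def IsSidon {G : Type*} [AddCommGroup G] (A : Finset G) : Prop :=
  ∀ a ∈ A, ∀ b ∈ A, ∀ c ∈ A, ∀ d ∈ A, a + b = c + d → (a = c ∧ b = d) ∨ (a = d ∧ b = c)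

section Sidon
variable {G : Type*} [AddCommGroup G] [DecidableEq G] {A : Finset G}

lemma fiber_subset (hA : IsSidon A) {n : G} {a b : G} (ha : a ∈ A) (hb : b ∈ A)
    (hab : a + b = n) :
    ((A ×ˢ A).filter fun q => q.1 + q.2 = n) ⊆ {(a, b), (b, a)} := by
  rintro ⟨c, d⟩ hcd
  simp only [Finset.mem_filter, Finset.mem_product] at hcd
  rcases hA c hcd.1.1 d hcd.1.2 a ha b hb (by rw [hcd.2, hab]) with ⟨h1, h2⟩ | ⟨h1, h2⟩ <;>
    simp [h1, h2]

lemma repFn_le_two (hA : IsSidon A) (n : G) : repFn A n ≤ 2 := by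
  unfold repFn
  by_cases h : ((A ×ˢ A).filter fun q => q.1 + q.2 = n).Nonempty
  · obtain ⟨⟨a, b⟩, hab⟩ := h
    simp only [Finset.mem_filter, Finset.mem_product] at hab
    calc ((A ×ˢ A).filter fun q => q.1 + q.2 = n).card
        ≤ ({(a, b), (b, a)} : Finset (G × G)).card :=
          Finset.card_le_card (fiber_subset hA hab.1.1 hab.1.2 hab.2)
      _ ≤ 2 := (Finset.card_insert_le _ _).trans (by simp)
  · simp [Finset.not_nonempty_iff_eq_empty.mp h]

lemma fiber_eq (hA : IsSidon A) {n : G} {a b : G} (ha : a ∈ A) (hb : b ∈ A)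
    (hne : a ≠ b) (hab : a + b = n) :
    ((A ×ˢ A).filter fun q => q.1 + q.2 = n) = {(a, b), (b, a)} := by
  refine le_antisymm (fiber_subset hA ha hb hab) ?_
  intro q hq
  simp only [Finset.mem_insert, Finset.mem_singleton] at hq
  rcases hq with rfl | rfl <;>
    simp [Finset.mem_filter, ha, hb, hab, add_comm b a]

lemma repFn_eq_two_iff (hA : IsSidon A) (n : G) :
    repFn A n = 2 ↔ n ∈ A.offDiag.image fun q => q.1 + q.2 := by
  constructor
  · intro h
    unfold repFn at h
    obtain ⟨⟨a, b⟩, hab, ⟨c, d⟩, hcd, hne⟩ := Finset.one_lt_card.mp (by omega :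
      1 < ((A ×ˢ A).filter fun q => q.1 + q.2 = n).card)
    simp only [Finset.mem_filter, Finset.mem_product] at hab hcd
    have := hA a hab.1.1 b hab.1.2 c hcd.1.1 d hcd.1.2 (by rw [hab.2, hcd.2])
    rcases this with ⟨h1, h2⟩ | ⟨h1, h2⟩
    · exact absurd (Prod.ext h1 h2) hne
    · refine Finset.mem_image.mpr ⟨(a, b), Finset.mem_offDiag.mpr ⟨hab.1.1, hab.1.2, ?_⟩, hab.2⟩
      intro h'; exact hne (Prod.ext (h'.trans h2) (h'.symm.trans h1))
  · intro h
    obtain ⟨⟨a, b⟩, hq, hsum⟩ := Finset.mem_image.mp h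
    obtain ⟨ha, hb, hne⟩ := Finset.mem_offDiag.mp hq
    unfold repFn
    rw [fiber_eq hA ha hb hne hsum, Finset.card_insert_of_notMem (by simp [Prod.ext_iff]; tauto),
      Finset.card_singleton]

lemma two_mul_card_image (hA : IsSidon A) :
    2 * (A.offDiag.image fun q => q.1 + q.2).card = A.card * A.card - A.card := by
  have h1 : A.offDiag.card = ∑ n ∈ A.offDiag.image (fun q => q.1 + q.2),
      (A.offDiag.filter fun q => q.1 + q.2 = n).card :=
    Finset.card_eq_sum_card_image _ _
  have h2 : ∀ n ∈ A.offDiag.image (fun q => q.1 + q.2),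
      (A.offDiag.filter fun q => q.1 + q.2 = n).card = 2 := by
    intro n hn
    obtain ⟨⟨a, b⟩, hq, hsum⟩ := Finset.mem_image.mp hn
    obtain ⟨ha, hb, hne⟩ := Finset.mem_offDiag.mp hq
    have : (A.offDiag.filter fun q => q.1 + q.2 = n) = {(a, b), (b, a)} := by
      refine le_antisymm ?_ ?_
      · intro q hq'
        simp only [Finset.mem_filter] at hq'
        obtain ⟨hq1, hq2⟩ := hq'
        obtain ⟨hc, hd, _⟩ := Finset.mem_offDiag.mp hq1
        have := fiber_subset hA ha hb hsum
          (Finset.mem_filter.mpr ⟨Finset.mem_product.mpr ⟨hc, hd⟩, hq2⟩)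
        simpa using this
      · intro q hq'
        simp only [Finset.mem_insert, Finset.mem_singleton] at hq'
        rcases hq' with rfl | rfl <;>
          simp [Finset.mem_filter, Finset.mem_offDiag, ha, hb, hne, Ne.symm hne, hsum,
            add_comm b a]
    rw [this, Finset.card_insert_of_notMem (by simp [Prod.ext_iff]; tauto),
      Finset.card_singleton]
    
  rw [Finset.sum_congr rfl h2, Finset.sum_const, smul_eq_mul, mul_comm] at h1
  rw [← h1, Finset.offDiag_card]

end Sidon


lemma indep_lemma (p : ℕ) [Fact p.Prime] (θ : GaloisField p 3)
    (hθ : ∀ l : ZMod p, θ ≠ algebraMap (ZMod p) (GaloisField p 3) l)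
    (a b c : ZMod p)
    (heq : algebraMap (ZMod p) (GaloisField p 3) a * θ ^ 2 +
      algebraMap (ZMod p) (GaloisField p 3) b * θ +
      algebraMap (ZMod p) (GaloisField p 3) c = 0) : a = 0 ∧ b = 0 ∧ c = 0 := by
  by_contra habc
  push_neg at habc
  set q : (ZMod p)[X] := C a * X ^ 2 + C b * X + C c with hq
  have hqa : q.coeff 2 = a := by simp [hq, coeff_C]
  have hqb : q.coeff 1 = b := by simp [hq, coeff_C]
  have hqc : q.coeff 0 = c := by simp [hq, coeff_C]
  have hqne : q ≠ 0 := by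
    intro h
    rw [h] at hqa hqb hqc
    simp only [coeff_zero] at hqa hqb hqc
    rcases Decidable.em (a = 0) with ha | ha
    · rcases Decidable.em (b = 0) with hb | hb
      · exact habc ha hb hqc.symm
      · exact hb hqb.symm
    · exact ha hqa.symm
  have haev : Polynomial.aeval θ q = 0 := by
    simp only [hq, map_add, map_mul, aeval_C, aeval_X_pow, aeval_X, map_pow]
    exact heq
  have hdegq : q.degree ≤ 2 := by
    refine (degree_add_le _ _).trans (max_le ((degree_add_le _ _).trans (max_le ?_ ?_)) ?_)
    · exact degree_C_mul_X_pow_le 2 a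
    · exact (degree_C_mul_X_le b).trans (by norm_num)
    · exact degree_C_le.trans (by norm_num)
  have hint : IsIntegral (ZMod p) θ := IsIntegral.of_finite (ZMod p) θ
  have hmd : (minpoly (ZMod p) θ).degree ≤ 2 :=
    (minpoly.degree_le_of_ne_zero (ZMod p) θ hqne haev).trans hdegq
  have hmnd : (minpoly (ZMod p) θ).natDegree ≤ 2 := natDegree_le_iff_degree_le.mpr hmd
  have hdvd : (minpoly (ZMod p) θ).natDegree ∣ 3 := by
    have h1 : Module.finrank (ZMod p) (ZMod p)⟮θ⟯ = (minpoly (ZMod p) θ).natDegree :=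
      IntermediateField.adjoin.finrank hint
    have h2 : Module.finrank (ZMod p) (ZMod p)⟮θ⟯ *
        Module.finrank (ZMod p)⟮θ⟯ (GaloisField p 3) = 3 := by
      rw [Module.finrank_mul_finrank, GaloisField.finrank p (by norm_num)]
    exact h1 ▸ ⟨_, h2.symm⟩
  have h1 : (minpoly (ZMod p) θ).natDegree = 1 := by
    rcases (Nat.prime_three.eq_one_or_self_of_dvd _ hdvd) with h | h
    · exact h
    · omega
  obtain ⟨l, hl⟩ := minpoly.mem_range_of_degree_eq_one (ZMod p) θ
    (degree_eq_iff_natDegree_eq_of_pos (by norm_num) |>.mpr h1)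
  exact hθ l hl.symm

lemma exists_sidon (p : ℕ) (hp : p.Prime) :
    ∃ A : Finset (ZMod (p ^ 2 + p + 1)), IsSidon A ∧ A.card = p + 1 := by
  haveI : Fact p.Prime := ⟨hp⟩
  classical
  set F := GaloisField p 3 with hF
  set φ : ZMod p →+* F := algebraMap (ZMod p) F with hφ
  have hp2 : 2 ≤ p := hp.two_le
  have hcardF : Nat.card F = p ^ 3 := GaloisField.card (p := p) (n := 3) (by norm_num)
  obtain ⟨θ, hθ⟩ : ∃ θ : F, ∀ l : ZMod p, θ ≠ φ l := by
    by_contra h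
    push_neg at h
    have hs : Function.Surjective φ := fun x => (h x).imp fun l hl => hl.symm
    have := Nat.card_le_card_of_surjective φ hs
    rw [hcardF, Nat.card_zmod] at this
    have h1 : p ^ 1 < p ^ 3 := Nat.pow_lt_pow_right hp.one_lt (by norm_num)
    rw [pow_one] at h1
    omega
  have hind := indep_lemma p θ hθ
  have hzero : ∀ c : ZMod p, θ + φ c ≠ 0 := by
    intro c h
    exact hθ (-c) (by rw [map_neg]; exact eq_neg_of_add_eq_zero_left h)
  -- the nine key computational lemmas
  have K22 : ∀ c1 c2 c3 c4 l : ZMod p, (θ + φ c1) * (θ + φ c2) = φ l * ((θ + φ c3) * (θ + φ c4)) →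
      l = 1 ∧ ((c1 = c3 ∧ c2 = c4) ∨ (c1 = c4 ∧ c2 = c3)) := by
    intro c1 c2 c3 c4 l heq
    have e0 : φ (1 - l) * θ ^ 2 + φ (c1 + c2 - l * (c3 + c4)) * θ +
        φ (c1 * c2 - l * (c3 * c4)) = 0 := by
      simp only [map_sub, map_add, map_mul, map_one]
      linear_combination heq
    obtain ⟨h1, h2, h3⟩ := hind _ _ _ e0
    have hl : l = 1 := by linear_combination -h1
    subst hl
    rw [one_mul] at h2 h3
    have hs : c1 + c2 = c3 + c4 := by linear_combination h2
    have hpr : c1 * c2 = c3 * c4 := by linear_combination h3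
    refine ⟨rfl, ?_⟩
    have hz : (c1 - c3) * (c1 - c4) = 0 := by linear_combination c1 * hs - hpr
    rcases mul_eq_zero.mp hz with h | h
    · left
      have h13 : c1 = c3 := by linear_combination h
      exact ⟨h13, by linear_combination hs - h⟩
    · right
      have h14 : c1 = c4 := by linear_combination h
      exact ⟨h14, by linear_combination hs - h⟩
  have K21 : ∀ c1 c2 c3 l : ZMod p, (θ + φ c1) * (θ + φ c2) = φ l * (θ + φ c3) → False := by
    intro c1 c2 c3 l heq
    have e0 : φ 1 * θ ^ 2 + φ (c1 + c2 - l) * θ + φ (c1 * c2 - l * c3) = 0 := by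
      simp only [map_sub, map_add, map_mul, map_one]
      linear_combination heq
    exact one_ne_zero (hind _ _ _ e0).1
  have K20 : ∀ c1 c2 l : ZMod p, (θ + φ c1) * (θ + φ c2) = φ l → False := by
    intro c1 c2 l heq
    have e0 : φ 1 * θ ^ 2 + φ (c1 + c2) * θ + φ (c1 * c2 - l) = 0 := by
      simp only [map_sub, map_add, map_mul, map_one]
      linear_combination heq
    exact one_ne_zero (hind _ _ _ e0).1
  have K12 : ∀ c1 c3 c4 l : ZMod p, l ≠ 0 →
      (θ + φ c1) = φ l * ((θ + φ c3) * (θ + φ c4)) → False := by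
    intro c1 c3 c4 l hl heq
    have e0 : φ l * θ ^ 2 + φ (l * (c3 + c4) - 1) * θ + φ (l * (c3 * c4) - c1) = 0 := by
      simp only [map_sub, map_add, map_mul, map_one]
      linear_combination -heq
    exact hl (hind _ _ _ e0).1
  have K11 : ∀ c1 c3 l : ZMod p, (θ + φ c1) = φ l * (θ + φ c3) → l = 1 ∧ c1 = c3 := by
    intro c1 c3 l heq
    have e0 : φ 0 * θ ^ 2 + φ (1 - l) * θ + φ (c1 - l * c3) = 0 := by
      simp only [map_sub, map_add, map_mul, map_one, map_zero]
      linear_combination heq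
    obtain ⟨-, h2, h3⟩ := hind _ _ _ e0
    have hl : l = 1 := by linear_combination -h2
    subst hl
    exact ⟨rfl, by linear_combination h3⟩
  have K10 : ∀ c1 l : ZMod p, (θ + φ c1) = φ l → False := by
    intro c1 l heq
    exact hθ (l - c1) (by rw [map_sub]; linear_combination heq)
  have K02 : ∀ c3 c4 l : ZMod p, l ≠ 0 → (1 : F) = φ l * ((θ + φ c3) * (θ + φ c4)) → False := by
    intro c3 c4 l hl heq
    have e0 : φ l * θ ^ 2 + φ (l * (c3 + c4)) * θ + φ (l * (c3 * c4) - 1) = 0 := by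
      simp only [map_sub, map_add, map_mul, map_one]
      linear_combination -heq
    exact hl (hind _ _ _ e0).1
  have K01 : ∀ c3 l : ZMod p, l ≠ 0 → (1 : F) = φ l * (θ + φ c3) → False := by
    intro c3 l hl heq
    have e0 : φ 0 * θ ^ 2 + φ l * θ + φ (l * c3 - 1) = 0 := by
      simp only [map_sub, map_add, map_mul, map_one, map_zero]
      linear_combination -heq
    exact hl (hind _ _ _ e0).2.1
  -- the units, subgroup, and quotient
  let u : ZMod p → Fˣ := fun c => Units.mk0 (θ + φ c) (hzero c)
  let U : Subgroup Fˣ := (Units.map (φ : ZMod p →* F)).range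
  let Q := Fˣ ⧸ U
  let π : Fˣ →* Q := QuotientGroup.mk' U
  let B : Finset Fˣ := insert 1 (Finset.univ.image u)
  have hgood : ∀ b ∈ B, (b : F) = 1 ∨ ∃ c, (b : F) = θ + φ c := by
    intro b hb
    rcases Finset.mem_insert.mp hb with rfl | hb
    · left; rfl
    · obtain ⟨c, -, rfl⟩ := Finset.mem_image.mp hb
      exact Or.inr ⟨c, rfl⟩
  have hrel : ∀ b b' : Fˣ, π b = π b' → ∃ l : ZMod p, l ≠ 0 ∧ (b' : F) = φ l * (b : F) := by
    intro b b' h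
    obtain ⟨z, hz, hbz⟩ := (QuotientGroup.mk'_eq_mk' (N := U)).mp h
    obtain ⟨w, rfl⟩ := hz
    refine ⟨(w : ZMod p), w.ne_zero, ?_⟩
    have h2 : ((b * Units.map (φ : ZMod p →* F) w : Fˣ) : F) = (b' : F) := by rw [hbz]
    rw [Units.val_mul] at h2
    rw [← h2, mul_comm]
    norm_num
  have hKmain : ∀ b1 ∈ B, ∀ b2 ∈ B, ∀ b3 ∈ B, ∀ b4 ∈ B, ∀ l : ZMod p, l ≠ 0 →
      ((b1 : F) * b2 = φ l * ((b3 : F) * b4)) →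
      (b1 = b3 ∧ b2 = b4) ∨ (b1 = b4 ∧ b2 = b3) := by
    intro b1 hb1 b2 hb2 b3 hb3 b4 hb4 l hl heq
    rcases hgood b1 hb1 with h1 | ⟨c1, h1⟩ <;> rcases hgood b2 hb2 with h2 | ⟨c2, h2⟩ <;>
      rcases hgood b3 hb3 with h3 | ⟨c3, h3⟩ <;> rcases hgood b4 hb4 with h4 | ⟨c4, h4⟩ <;>
      rw [h1, h2, h3, h4] at heq <;> (try simp only [one_mul, mul_one] at heq)
    · exact Or.inl ⟨Units.ext (h1.trans h3.symm), Units.ext (h2.trans h4.symm)⟩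
    · exact (K01 c4 l hl heq).elim
    · exact (K01 c3 l hl heq).elim
    · exact (K02 c3 c4 l hl heq).elim
    · exact (K10 c2 l heq).elim
    · obtain ⟨-, hc⟩ := K11 c2 c4 l heq
      exact Or.inl ⟨Units.ext (h1.trans h3.symm), Units.ext (by rw [h2, h4, hc])⟩
    · obtain ⟨-, hc⟩ := K11 c2 c3 l heq
      exact Or.inr ⟨Units.ext (h1.trans h4.symm), Units.ext (by rw [h2, h3, hc])⟩
    · exact (K12 c2 c3 c4 l hl heq).elim
    · exact (K10 c1 l heq).elim
    · obtain ⟨-, hc⟩ := K11 c1 c4 l heq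
      exact Or.inr ⟨Units.ext (by rw [h1, h4, hc]), Units.ext (h2.trans h3.symm)⟩
    · obtain ⟨-, hc⟩ := K11 c1 c3 l heq
      exact Or.inl ⟨Units.ext (by rw [h1, h3, hc]), Units.ext (h2.trans h4.symm)⟩
    · exact (K12 c1 c3 c4 l hl heq).elim
    · exact (K20 c1 c2 l heq).elim
    · exact (K21 c1 c2 c4 l heq).elim
    · exact (K21 c1 c2 c3 l heq).elim
    · obtain ⟨-, hc⟩ := K22 c1 c2 c3 c4 l heq
      rcases hc with ⟨e1, e2⟩ | ⟨e1, e2⟩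
      · exact Or.inl ⟨Units.ext (by rw [h1, h3, e1]), Units.ext (by rw [h2, h4, e2])⟩
      · exact Or.inr ⟨Units.ext (by rw [h1, h4, e1]), Units.ext (by rw [h2, h3, e2])⟩
  let A' : Finset Q := B.image π
  have hπinjB : Set.InjOn π B := by
    intro b hb b' hb' h
    obtain ⟨l, hl, hrel'⟩ := hrel b b' h
    have heq : (b' : F) * (1 : Fˣ) = φ l * ((b : F) * (1 : Fˣ)) := by
      rw [Units.val_one, mul_one, mul_one]; exact hrel'
    rcases hKmain b' hb' 1 (Finset.mem_insert_self 1 _) b hb 1 (Finset.mem_insert_self 1 _)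
        l hl heq with ⟨e1, -⟩ | ⟨e1, e2⟩
    · exact e1.symm
    · rw [e1, ← e2]
  have hSidonQ : ∀ x ∈ A', ∀ y ∈ A', ∀ z ∈ A', ∀ w ∈ A', x * y = z * w →
      (x = z ∧ y = w) ∨ (x = w ∧ y = z) := by
    intro x hx y hy z hz w hw hxy
    obtain ⟨b1, hb1, rfl⟩ := Finset.mem_image.mp hx
    obtain ⟨b2, hb2, rfl⟩ := Finset.mem_image.mp hy
    obtain ⟨b3, hb3, rfl⟩ := Finset.mem_image.mp hz
    obtain ⟨b4, hb4, rfl⟩ := Finset.mem_image.mp hw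
    have hmk : π (b3 * b4) = π (b1 * b2) := by rw [map_mul, map_mul, hxy]
    obtain ⟨l, hl, hrel'⟩ := hrel _ _ hmk
    rw [Units.val_mul, Units.val_mul] at hrel'
    rcases hKmain b1 hb1 b2 hb2 b3 hb3 b4 hb4 l hl hrel' with ⟨e1, e2⟩ | ⟨e1, e2⟩
    · exact Or.inl ⟨by rw [e1], by rw [e2]⟩
    · exact Or.inr ⟨by rw [e1], by rw [e2]⟩
  have huinj : Function.Injective u := by
    intro c c' h
    have h2 : θ + φ c = θ + φ c' := congrArg Units.val h
    exact φ.injective (add_left_cancel h2)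
  have h1B : (1 : Fˣ) ∉ Finset.univ.image u := by
    intro h
    obtain ⟨c, -, hc⟩ := Finset.mem_image.mp h
    have h2 : θ + φ c = 1 := congrArg Units.val hc
    exact K10 c 1 (by rw [map_one]; exact h2)
  have hBcard : B.card = p + 1 := by
    rw [Finset.card_insert_of_notMem h1B, Finset.card_image_of_injective _ huinj,
      Finset.card_univ, ZMod.card]
  have hA'card : A'.card = p + 1 := by
    rw [Finset.card_image_of_injOn hπinjB, hBcard]
  haveI hQcyc : IsCyclic Q := isCyclic_of_surjective π (QuotientGroup.mk'_surjective U)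
  have hUcard : Nat.card U = p - 1 := by
    have hinj : Function.Injective (Units.map (φ : ZMod p →* F)) :=
      Units.map_injective φ.injective
    have h2 := Nat.card_congr (MonoidHom.ofInjective hinj).toEquiv
    rw [← h2, Nat.card_eq_fintype_card, ZMod.card_units]
  have hFu : Nat.card Fˣ = p ^ 3 - 1 := by
    rw [Nat.card_units, hcardF]
  have hQcard : Nat.card Q = p ^ 2 + p + 1 := by
    have h := Subgroup.card_eq_card_quotient_mul_card_subgroup U
    rw [hFu, hUcard] at h
    have key : (p ^ 2 + p + 1) * (p - 1) = p ^ 3 - 1 := by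
      obtain ⟨k, rfl⟩ : ∃ k, p = k + 1 := ⟨p - 1, by omega⟩
      have h3 : (k + 1) ^ 3 = ((k + 1) ^ 2 + (k + 1) + 1) * k + 1 := by ring
      simp only [Nat.add_sub_cancel]
      omega
    have hpos : 0 < p - 1 := by omega
    exact (Nat.eq_of_mul_eq_mul_right hpos (key.trans h)).symm
  haveI : NeZero (p ^ 2 + p + 1) := ⟨by positivity⟩
  have hmcard : Nat.card (Multiplicative (ZMod (p ^ 2 + p + 1))) = Nat.card Q := by
    rw [hQcard]
    exact Nat.card_zmod _
  let e : Multiplicative (ZMod (p ^ 2 + p + 1)) ≃* Q := mulEquivOfCyclicCardEq hmcard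
  let f : Q → ZMod (p ^ 2 + p + 1) := fun q => Multiplicative.toAdd (e.symm q)
  have hfinj : Function.Injective f :=
    Multiplicative.toAdd.injective.comp e.symm.injective
  have hfmul : ∀ x y : Q, f (x * y) = f x + f y := by
    intro x y
    simp only [f, map_mul, toAdd_mul]
  refine ⟨A'.image f, ?_, by rw [Finset.card_image_of_injective _ hfinj, hA'card]⟩
  intro a ha b hb c hc d hd habcd
  obtain ⟨x, hx, rfl⟩ := Finset.mem_image.mp ha
  obtain ⟨y, hy, rfl⟩ := Finset.mem_image.mp hb
  obtain ⟨z, hz, rfl⟩ := Finset.mem_image.mp hc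
  obtain ⟨w, hw, rfl⟩ := Finset.mem_image.mp hd
  have hxyzw : x * y = z * w := hfinj (by rw [hfmul, hfmul]; exact habcd)
  rcases hSidonQ x hx y hy z hz w hw hxyzw with ⟨e1, e2⟩ | ⟨e1, e2⟩
  · exact Or.inl ⟨by rw [e1], by rw [e2]⟩
  · exact Or.inr ⟨by rw [e1], by rw [e2]⟩


theorem stmt_5 (p : ℕ) (hp : p.Prime) :
    ∃ A : Finset (ZMod (p ^ 2 + p + 1)),
      (∀ n : ZMod (p ^ 2 + p + 1), repFn A n ≤ 2) ∧
      (({n : ZMod (p ^ 2 + p + 1) | repFn A n = 2}.ncard : ℝ) =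
        (1 / 2 : ℝ) * (p ^ 2 + p + 1) - 1 / 2) := by
  obtain ⟨A, hA, hcard⟩ := exists_sidon p hp
  refine ⟨A, repFn_le_two hA, ?_⟩
  have hset : {n : ZMod (p ^ 2 + p + 1) | repFn A n = 2} =
      ↑(A.offDiag.image fun q => q.1 + q.2) := by
    ext n
    simp only [Set.mem_setOf_eq, Finset.coe_image, Set.mem_image, Finset.mem_coe]
    rw [repFn_eq_two_iff hA n, Finset.mem_image]
  rw [hset, Set.ncard_coe_finset]
  have h2 := two_mul_card_image hA
  rw [hcard] at h2
  have e1 : (p + 1) * (p + 1) - (p + 1) = p ^ 2 + p :=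
    Nat.sub_eq_of_eq_add (by ring)
  rw [e1] at h2
  have h3 : (2 : ℝ) * ((A.offDiag.image fun q => q.1 + q.2).card : ℝ) = (p : ℝ) ^ 2 + p := by
    exact_mod_cast congrArg (Nat.cast : ℕ → ℝ) h2
  push_cast
  linarith
end

section
/- Let G be a finite abelian group with |G| = m and let A ⊆ G. If R_A(g) ≤ 7 for all g ∈ G, then the number of elements g ∈ G with R_A(g) = 4 satisfies |S_4| ≤ (3/4)m + √(7m) + 3/4. -/
open Finset

lemma fiber_sum {β G : Type*} [Fintype G] [DecidableEq G] (S : Finset β) (F : β → G) :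
    S.card = ∑ g : G, (S.filter fun p => F p = g).card :=
  Finset.card_eq_sum_card_fiberwise (fun x _ => Finset.mem_univ _)

lemma fiber_sq {β G : Type*} [Fintype G] [DecidableEq G] (S : Finset β) (F : β → G) :
    ∑ g : G, ((S.filter fun p => F p = g).card)^2
      = ((S ×ˢ S).filter fun q => F q.1 = F q.2).card := by
  rw [Finset.card_eq_sum_card_fiberwise (f := fun q => F q.1) (t := Finset.univ)
      (fun x _ => Finset.mem_univ _)]
  refine Finset.sum_congr rfl fun g _ => ?_
  rw [Finset.filter_filter]
  rw [show ((S ×ˢ S).filter fun q => F q.1 = F q.2 ∧ F q.1 = g)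
      = ((S ×ˢ S).filter fun q => F q.1 = g ∧ F q.2 = g) from
    Finset.filter_congr (fun q _ => by constructor <;> (rintro ⟨h1, h2⟩) <;>
      (constructor <;> simp_all))]
  rw [Finset.filter_product (fun a => F a = g) (fun a => F a = g), Finset.card_product, sq]


theorem stmt_6 {G : Type*} [AddCommGroup G] [Fintype G] [DecidableEq G]
    (m : ℕ) (hm : Fintype.card G = m) (A : Finset G)
    (h : ∀ g : G, repFn A g ≤ 7) :
    (((Finset.univ.filter fun g : G => repFn A g = 4).card : ℝ)) ≤
      (3 / 4 : ℝ) * m + Real.sqrt (7 * m) + 3 / 4 := by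
  classical
  set x := A.card with hxdef
  set n := (Finset.univ.filter fun g : G => repFn A g = 4).card with hndef
  have hm1 : 1 ≤ m := hm ▸ Fintype.card_pos
  -- sum of repFn = x^2
  have hsum : ∑ g : G, repFn A g = x^2 := by
    have := fiber_sum (A ×ˢ A) (fun p : G × G => p.1 + p.2)
    simp only [Finset.card_product] at this
    simpa [repFn, sq] using this.symm
  have hx2le : x^2 ≤ 7*m := by
    rw [← hsum]
    calc ∑ g : G, repFn A g ≤ ∑ _g : G, 7 := Finset.sum_le_sum (fun g _ => h g)
    _ = 7*m := by simp [hm, mul_comm]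
  -- energy identity: sum of repFn^2 = sum of dF^2
  set dF : G → ℕ := fun d => ((A ×ˢ A).filter fun p : G × G => p.1 - p.2 = d).card with hdF
  have hE : ∑ g : G, (repFn A g)^2 = ∑ d : G, (dF d)^2 := by
    rw [show (fun g => (repFn A g)^2)
        = fun g => (((A ×ˢ A).filter fun p : G × G => p.1 + p.2 = g).card)^2 from rfl]
    rw [fiber_sq (A ×ˢ A) (fun p : G × G => p.1 + p.2),
        fiber_sq (A ×ˢ A) (fun p : G × G => p.1 - p.2)]
    apply Finset.card_nbij' (fun q => ((q.1.1, q.2.2), (q.2.1, q.1.2)))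
      (fun q => ((q.1.1, q.2.2), (q.2.1, q.1.2)))
    · intro q hq
      simp only [Finset.mem_coe, Finset.mem_filter, Finset.mem_product] at hq ⊢
      obtain ⟨⟨⟨h1, h2⟩, h3, h4⟩, h5⟩ := hq
      refine ⟨⟨⟨h1, h4⟩, h3, h2⟩, ?_⟩
      have : q.1.1 + q.1.2 = q.2.1 + q.2.2 := h5
      abel_nf
      linear_combination (norm := abel1) this
    · intro q hq
      simp only [Finset.mem_coe, Finset.mem_filter, Finset.mem_product] at hq ⊢
      obtain ⟨⟨⟨h1, h2⟩, h3, h4⟩, h5⟩ := hq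
      refine ⟨⟨⟨h1, h4⟩, h3, h2⟩, ?_⟩
      have : q.1.1 - q.1.2 = q.2.1 - q.2.2 := h5
      linear_combination (norm := abel1) this
    · intro q _; rfl
    · intro q _; rfl
  -- dF 0 = x
  have hd0 : dF 0 = x := by
    rw [hdF]
    apply Finset.card_nbij' (fun p => p.1) (fun a => (a, a))
    · intro p hp
      simp only [Finset.mem_coe, Finset.mem_filter, Finset.mem_product] at hp
      exact hp.1.1
    · intro a ha
      simp only [Finset.mem_coe, Finset.mem_filter, Finset.mem_product]
      exact ⟨⟨ha, ha⟩, sub_self a⟩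
    · intro p hp
      simp only [Finset.mem_coe, Finset.mem_filter, Finset.mem_product] at hp
      have : p.1 = p.2 := by have := hp.2; rwa [sub_eq_zero] at this
      exact Prod.ext rfl this
    · intro a _; rfl
  -- sum of dF = x^2
  have hdsum : ∑ d : G, dF d = x^2 := by
    have := fiber_sum (A ×ˢ A) (fun p : G × G => p.1 - p.2)
    simp only [Finset.card_product] at this
    simpa [hdF, sq] using this.symm
  -- pointwise bound and step A
  have hstepA : (∑ g : G, (repFn A g)^2) + 12 * n ≤ 7 * x^2 := by
    have hpt : ∀ g : G, (repFn A g)^2 + 12 * (if repFn A g = 4 then 1 else 0) ≤ 7 * repFn A g := by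
      intro g
      have h7 := h g
      interval_cases (repFn A g) <;> simp
    have hle : ∑ g : G, ((repFn A g)^2 + 12 * (if repFn A g = 4 then 1 else 0))
        ≤ ∑ g : G, 7 * repFn A g := Finset.sum_le_sum (fun g _ => hpt g)
    rw [Finset.sum_add_distrib, ← Finset.mul_sum, ← Finset.mul_sum, hsum] at hle
    rwa [hndef, Finset.card_filter]
  -- Cauchy-Schwarz over univ.erase 0, in ℝ
  set X : ℝ := (x : ℝ) with hX
  set M : ℝ := (m : ℝ) with hM
  have hMX : X^2 ≤ 7*M := by
    rw [hX, hM]; exact_mod_cast hx2le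
  have hcard_erase : ((Finset.univ.erase (0:G)).card : ℝ) = M - 1 := by
    rw [Finset.card_erase_of_mem (Finset.mem_univ _), Finset.card_univ, hm]
    push_cast [Nat.cast_sub hm1]
    ring
  have herase_sum : ∑ d ∈ Finset.univ.erase (0:G), (dF d : ℝ) = X^2 - X := by
    have h1 : ∑ d ∈ Finset.univ.erase (0:G), dF d + dF 0 = ∑ d : G, dF d :=
      Finset.sum_erase_add _ _ (Finset.mem_univ _)
    rw [hdsum, hd0] at h1
    have : (↑(∑ d ∈ Finset.univ.erase (0:G), dF d) : ℝ) + X = X^2 := by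
      rw [hX]; exact_mod_cast congrArg (Nat.cast : ℕ → ℝ) h1
    push_cast at this ⊢
    linarith
  have herase_sq : ∑ d ∈ Finset.univ.erase (0:G), (dF d : ℝ)^2 + X^2
      = ∑ g : G, ((repFn A g : ℝ))^2 := by
    have h1 : ∑ d ∈ Finset.univ.erase (0:G), (dF d)^2 + (dF 0)^2 = ∑ d : G, (dF d)^2 :=
      Finset.sum_erase_add _ _ (Finset.mem_univ _)
    rw [hd0, ← hE] at h1
    have := congrArg (Nat.cast : ℕ → ℝ) h1
    push_cast at this ⊢
    linarith
  have hCS : (X^2 - X)^2 + (M - 1) * X^2 ≤ (M - 1) * ∑ g : G, ((repFn A g : ℝ))^2 := by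
    have := Finset.sum_mul_sq_le_sq_mul_sq (Finset.univ.erase (0:G))
      (fun d => (dF d : ℝ)) (fun _ => (1:ℝ))
    simp only [mul_one, one_pow, Finset.sum_const, nsmul_eq_mul] at this
    rw [herase_sum, hcard_erase] at this
    have hnn : (0:ℝ) ≤ M - 1 := by
      rw [hM]; have : (1:ℝ) ≤ m := by exact_mod_cast hm1
      linarith
    nlinarith [this, herase_sq]
  -- assemble
  set Er : ℝ := ∑ g : G, ((repFn A g : ℝ))^2 with hEr
  have hA' : Er + 12 * (n : ℝ) ≤ 7 * X^2 := by
    have := congrArg (Nat.cast : ℕ → ℝ) (rfl : (∑ g : G, (repFn A g)^2) = ∑ g : G, (repFn A g)^2)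
    have hc : ((∑ g : G, (repFn A g)^2 : ℕ) : ℝ) = Er := by rw [hEr]; push_cast; rfl
    have := hstepA
    have : ((∑ g : G, (repFn A g)^2 : ℕ) : ℝ) + 12 * (n:ℝ) ≤ 7 * X^2 := by
      rw [hX]; exact_mod_cast this
    linarith [hc ▸ this]
  have hs : Real.sqrt (7 * M) ≥ 0 := Real.sqrt_nonneg _
  have hXs : X ≤ Real.sqrt (7 * M) := by
    rw [show (7:ℝ) * M = Real.sqrt (7*M) ^ 2 from (Real.sq_sqrt (by positivity)).symm] at hMX
    have hXnn : (0:ℝ) ≤ X := by rw [hX]; positivity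
    nlinarith [hMX]
  have hnM : (n : ℝ) ≤ M := by
    rw [hM, hndef, ← hm]
    exact_mod_cast le_trans (Finset.card_filter_le _ _) (le_of_eq (Finset.card_univ))
  have hXnn : (0:ℝ) ≤ X := by rw [hX]; positivity
  show (n : ℝ) ≤ 3/4 * M + Real.sqrt (7*M) + 3/4
  clear_value X M Er n
  clear hE hd0 hdsum hstepA herase_sum herase_sq hcard_erase hsum hx2le hndef hxdef h hdF hMX
  rcases eq_or_lt_of_le hm1 with h1 | h2
  · -- m = 1
    have hM1 : M = 1 := by rw [hM, ← h1]; norm_num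
    rw [hM1] at hnM ⊢
    norm_num
    have hs2 : (0:ℝ) ≤ Real.sqrt 7 := Real.sqrt_nonneg _
    linarith
  · -- m ≥ 2
    have hM2 : (2:ℝ) ≤ M := by rw [hM]; exact_mod_cast h2
    clear hM hX hm hm1 h2
    have h1 : 12 * (n:ℝ) * (M-1) ≤ 9*(M-1)^2 + 6*(M-1)*X := by
      nlinarith [mul_le_mul_of_nonneg_left hA' (by linarith : (0:ℝ) ≤ M - 1), hCS,
        sq_nonneg (X^2 - X - 3*(M-1))]
    have h2' : 12 * (n:ℝ) ≤ 9*(M-1) + 6*X := by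
      nlinarith [h1]
    linarith
end

section
/- Let p be a prime (more generally a prime power) and q = p² + p + 1. Then there exists a subset A ⊆ ℤ_q such that R_{A,−A}(n) = 1 for all nonzero n ∈ ℤ_q. -/
/-- `repFn2 A B g` is the number of ordered pairs `(a, b) ∈ A × B` with `a + b = g`. -/
def repFn2 {G : Type*} [AddCommGroup G] [DecidableEq G] (A B : Finset G) (g : G) : ℕ :=
  ((A ×ˢ B).filter fun p => p.1 + p.2 = g).card

section Auxiliary
open Polynomial

theorem pow_sub_X_dvd (F : Type) [Field F] (p m : ℕ) (hp : 1 ≤ p) :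
    (X:F[X])^p - X ∣ X^(p + (p-1)*m) - X := by
  have h1 : (X:F[X])^(p-1) - 1 ∣ (X^(p-1))^(m+1) - 1 := by
    simpa using sub_dvd_pow_sub_pow ((X:F[X])^(p-1)) 1 (m+1)
  have h2 : (X:F[X]) * ((X:F[X])^(p-1) - 1) = X^p - X := by
    rw [mul_sub, mul_one, ← pow_succ']
    congr 2
    omega
  have h3 : (X:F[X]) * (((X:F[X])^(p-1))^(m+1) - 1) = X^(p + (p-1)*m) - X := by
    rw [mul_sub, mul_one, ← pow_mul, ← pow_succ']
    congr 2
    have : p - 1 + 1 = p := by omega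
    calc (p-1)*(m+1) + 1 = (p-1)*m + ((p-1) + 1) := by ring
    _ = p + (p-1)*m := by omega
  rw [← h2, ← h3]
  exact mul_dvd_mul_left X h1

theorem exists_field_tower (p : ℕ) (hp : IsPrimePow p) :
    ∃ (F : Type) (_ : Field F) (_ : Fintype F) (K : Subfield F),
      Nat.card F = p ^ 3 ∧ Nat.card K = p := by
  classical
  obtain ⟨r, k, hr, hk, hpdef⟩ := hp
  have hrp : r.Prime := hr.nat_prime
  haveI : Fact r.Prime := ⟨hrp⟩
  have hp2 : 2 ≤ p := by
    calc 2 ≤ r := hrp.two_le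
    _ = r^1 := (pow_one r).symm
    _ ≤ r^k := Nat.pow_le_pow_right hrp.pos hk
    _ = p := hpdef
  set F := GaloisField r (3*k) with hF
  haveI : Finite F := inferInstance
  haveI fF : Fintype F := Fintype.ofFinite F
  have hcardF : Nat.card F = p ^ 3 := by
    rw [GaloisField.card r (3*k) (by omega), ← hpdef, ← pow_mul, Nat.mul_comm]
  have hφ : ∀ x y : F, (x + y)^p = x^p + y^p := by
    intro x y
    have := map_add (iterateFrobenius F r k) x y
    simpa [iterateFrobenius_def, hpdef] using this
  set K : Subfield F :=
    { carrier := {x : F | x ^ p = x}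
      mul_mem' := fun {a b} ha hb => by
        simp only [Set.mem_setOf_eq] at *
        rw [mul_pow, ha, hb]
      one_mem' := by simp
      add_mem' := fun {a b} ha hb => by
        simp only [Set.mem_setOf_eq] at *
        rw [hφ, ha, hb]
      zero_mem' := by
        simp only [Set.mem_setOf_eq]
        exact zero_pow (by omega)
      neg_mem' := fun {a} ha => by
        simp only [Set.mem_setOf_eq] at *
        have := map_neg (iterateFrobenius F r k) a
        simp only [iterateFrobenius_def, hpdef] at this
        rw [this, ha]
      inv_mem' := fun a ha => by
        simp only [Set.mem_setOf_eq] at *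
        rw [inv_pow, ha] } with hKdef
  refine ⟨F, inferInstance, fF, K, hcardF, ?_⟩
  have hmem : ∀ x : F, x ∈ K ↔ x ^ p = x := fun x => Iff.rfl
  set g : F[X] := X^p - X with hg
  have hgne : g ≠ 0 := FiniteField.X_pow_card_sub_X_ne_zero F (by omega)
  have hgsep : g.Separable := by
    rw [hg, ← hpdef]
    exact galois_poly_separable r (r^k) (dvd_pow_self r hk.ne')
  have hgdvd : g ∣ X^(Fintype.card F) - X := by
    have hc : Fintype.card F = p + (p-1)*(p^2+p) := by
      rw [← Nat.card_eq_fintype_card, hcardF]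
      obtain ⟨m, hm⟩ : ∃ m, p = m + 2 := ⟨p - 2, by omega⟩
      subst hm
      have h21 : m + 2 - 1 = m + 1 := rfl
      rw [h21]
      ring_nf
    rw [hc]
    exact pow_sub_X_dvd F p _ (by omega)
  have hsplits : g.Splits := by
    refine Splits.of_dvd ?_ (FiniteField.X_pow_card_sub_X_ne_zero F Fintype.one_lt_card) hgdvd
    rw [splits_iff_card_roots, FiniteField.roots_X_pow_card_sub_X,
      FiniteField.X_pow_card_sub_X_natDegree_eq F Fintype.one_lt_card]
    exact Finset.card_univ
  have hroots : g.roots.card = p := by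
    rw [(splits_iff_card_roots (f := g)).mp hsplits]
    exact (FiniteField.X_pow_card_sub_X_natDegree_eq F (by omega : 1 < p))
  have hnodup : g.roots.Nodup := g.nodup_roots hgsep
  have hsetK : (K : Set F) = ↑g.roots.toFinset := by
    ext x
    simp only [SetLike.mem_coe, hmem, Finset.coe_sort_coe, Multiset.mem_toFinset,
      mem_roots (show (X^p - X : F[X]) ≠ 0 from hgne), Finset.mem_coe, IsRoot.def, hg, eval_sub, eval_pow, eval_X, sub_eq_zero]
  have : Nat.card K = g.roots.toFinset.card := by
    rw [← Set.ncard_coe_finset, ← hsetK]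
    exact Nat.card_coe_set_eq _
  rw [this, Multiset.toFinset_card_of_nodup hnodup, hroots]


theorem stab (p : ℕ) (hp2 : 2 ≤ p) (F : Type) [Field F] [Fintype F] (K : Subfield F)
    (hK : Nat.card K = p) (hdim : Module.finrank K F = 3)
    (L : Submodule K F) (hL2 : Module.finrank K ↥L = 2) (c : F)
    (hc : ∀ x ∈ L, c * x ∈ L) : c ∈ K := by
  classical
  by_contra hcK
  set R : Subring F := Subring.closure (insert c (K : Set F)) with hR
  have hcR : c ∈ R := Subring.subset_closure (Set.mem_insert _ _)
  have hKR : ∀ x ∈ K, x ∈ R := fun x hx =>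
    Subring.subset_closure (Set.mem_insert_of_mem _ hx)
  have hstab : ∀ s ∈ R, ∀ x ∈ L, s * x ∈ L := by
    intro s hs
    induction hs using Subring.closure_induction with
    | mem y hy =>
      rcases Set.mem_insert_iff.mp hy with rfl | hyK
      · exact hc
      · intro x hx
        have := L.smul_mem (⟨y, hyK⟩ : K) hx
        simpa [Subfield.smul_def] using this
    | zero => intro x hx; simpa using L.zero_mem
    | one => intro x hx; simpa using hx
    | add a b _ _ ha hb => intro x hx; rw [add_mul]; exact L.add_mem (ha x hx) (hb x hx)
    | neg a _ ha => intro x hx; rw [neg_mul]; exact L.neg_mem (ha x hx)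
    | mul a b _ _ ha hb => intro x hx; rw [mul_assoc]; exact ha _ (hb x hx)
  haveI : Fintype ↥K := Fintype.ofFinite _
  -- R as K-submodule
  set Rmod : Submodule K F :=
    { carrier := (R : Set F)
      add_mem' := fun ha hb => R.add_mem ha hb
      zero_mem' := R.zero_mem
      smul_mem' := fun k x hx => R.mul_mem (hKR _ k.2) hx } with hRmod
  haveI : Fintype ↥Rmod := Fintype.ofFinite _
  set d := Module.finrank K ↥Rmod with hd
  have hcardRmod : Nat.card ↥Rmod = p ^ d := by
    rw [Nat.card_eq_fintype_card, hd, ← hK, Nat.card_eq_fintype_card]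
    exact Module.card_eq_pow_finrank
  -- now the field structure on R
  have hfield : IsField R := Finite.isField_of_domain ↥R
  letI fR : Field ↥R := hfield.toField
  haveI : Fintype ↥R := Fintype.ofFinite _
  set e := Module.finrank ↥R F with he
  have hcardF2 : Nat.card F = (p ^ d) ^ e := by
    have h1 : Nat.card F = Nat.card ↥R ^ e := by
      rw [Nat.card_eq_fintype_card, Nat.card_eq_fintype_card, he]
      exact Module.card_eq_pow_finrank
    rw [h1, ← hcardRmod]
    rfl
  have hcardF : Nat.card F = p ^ 3 := by
    rw [Nat.card_eq_fintype_card, ← hK, Nat.card_eq_fintype_card, ← hdim]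
    exact Module.card_eq_pow_finrank
  have hde : d * e = 3 := by
    have : p ^ (d * e) = p ^ 3 := by rw [pow_mul, ← hcardF2, hcardF]
    exact Nat.pow_right_injective hp2 this
  -- K strictly inside R
  have hKlt : p < p ^ d := by
    have hsub : (K : Set F) ⊂ (R : Set F) := by
      refine ⟨fun x hx => hKR x hx, fun hsup => hcK ?_⟩
      exact hsup hcR
    have hlt : Nat.card ↥K < Nat.card ↥Rmod := by
      have e1 : Nat.card ↥K = (K : Set F).ncard := by
        rw [← Nat.card_coe_set_eq]
        exact Nat.card_congr (Equiv.subtypeEquivRight (by simp))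
      have e2 : Nat.card ↥Rmod = (R : Set F).ncard := by
        rw [← Nat.card_coe_set_eq]
        exact Nat.card_congr (Equiv.subtypeEquivRight (by simp [hRmod]))
      rw [e1, e2]
      exact Set.ncard_lt_ncard hsub (Set.toFinite _)
    rwa [hK, hcardRmod] at hlt
  have hd3 : d = 3 ∧ e = 1 := by
    have hd2 : 2 ≤ d := by
      by_contra h
      have h1 : d ≤ 1 := by omega
      interval_cases d <;> simp at hKlt <;> omega
    have hddvd : d ∣ 3 := ⟨e, hde.symm⟩
    have : d ≤ 3 := Nat.le_of_dvd (by norm_num) hddvd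
    interval_cases d <;> omega
  -- R = F
  have hRuniv : (R : Set F) = Set.univ := by
    apply Set.eq_of_subset_of_ncard_le (Set.subset_univ _)
    have h1 : (Set.univ : Set F).ncard = p ^ 3 := by
      rw [← Nat.card_coe_set_eq, Nat.card_congr (Equiv.Set.univ F), hcardF]
    have h2 : (R : Set F).ncard = p ^ 3 := by
      rw [← Nat.card_coe_set_eq]
      have e2 : Nat.card ↥(R : Set F) = Nat.card ↥Rmod :=
        Nat.card_congr (Equiv.subtypeEquivRight (by simp [hRmod]))
      rw [e2, hcardRmod, hd3.1]
    rw [h1, h2]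
  -- L is everything: contradiction
  have hLbot : ∃ x₀ ∈ L, x₀ ≠ 0 := by
    rw [← Submodule.ne_bot_iff]
    intro h
    rw [h, finrank_bot] at hL2
    exact (by omega : (0:ℕ) ≠ 2) hL2
  obtain ⟨x₀, hx₀L, hx₀⟩ := hLbot
  have hLtop : L = ⊤ := by
    rw [Submodule.eq_top_iff']
    intro y
    have : (y * x₀⁻¹) * x₀ ∈ L := by
      apply hstab
      · show y * x₀⁻¹ ∈ R
        have : (R : Set F) = Set.univ := hRuniv
        rw [← SetLike.mem_coe, this]; trivial
      · exact hx₀L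
    rwa [mul_assoc, inv_mul_cancel₀ hx₀, mul_one] at this
  rw [hLtop, finrank_top, hdim] at hL2
  omega

theorem singer (p : ℕ) (hp2 : 2 ≤ p) (F : Type) [Field F] [Fintype F] (K : Subfield F)
    (hF : Nat.card F = p ^ 3) (hK : Nat.card K = p) :
    ∃ A : Finset (ZMod (p ^ 2 + p + 1)),
      ∀ n : ZMod (p ^ 2 + p + 1), n ≠ 0 →
        repFn2 A (A.image fun a => -a) n = 1 := by
  classical
  have hqpos : 0 < p ^ 2 + p + 1 := by positivity
  haveI : NeZero (p ^ 2 + p + 1) := ⟨hqpos.ne'⟩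
  haveI : Fintype ↥K := Fintype.ofFinite _
  haveI : FiniteDimensional ↥K F := Module.Finite.of_finite
  have hdim : Module.finrank K F = 3 := by
    have h := Module.card_eq_pow_finrank (K := ↥K) (V := F)
    rw [← Nat.card_eq_fintype_card, ← Nat.card_eq_fintype_card, hF, hK] at h
    exact (Nat.pow_right_injective hp2 h).symm
  -- ### a surjective homomorphism π with kernel the K-units
  obtain ⟨π, hπsurj, hker⟩ : ∃ π : Fˣ →* Multiplicative (ZMod (p ^ 2 + p + 1)),
      Function.Surjective π ∧ ∀ u : Fˣ, (π u = 1 ↔ (u : F) ∈ K) := by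
    set Ksub : Subgroup Fˣ :=
      { carrier := {u : Fˣ | (u : F) ∈ K}
        one_mem' := K.one_mem
        mul_mem' := fun {a b} ha hb => by
          simp only [Set.mem_setOf_eq, Units.val_mul] at *
          exact K.mul_mem ha hb
        inv_mem' := fun {a} ha => by
          simp only [Set.mem_setOf_eq] at *
          rw [Units.val_inv_eq_inv_val]
          exact K.inv_mem ha } with hKsub
    have hKsubMem : ∀ u : Fˣ, u ∈ Ksub ↔ (u : F) ∈ K := fun u => Iff.rfl
    have hcardKsub : Nat.card Ksub = p - 1 := by
      have e1 : ↥Ksub ≃ {x : ↥K // x ≠ 0} :=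
        { toFun := fun u => ⟨⟨(u : Fˣ), u.2⟩, by
            intro h
            have : ((u : Fˣ) : F) = 0 := congrArg Subtype.val h
            exact Units.ne_zero _ this⟩
          invFun := fun x => ⟨Units.mk0 (x : F) (fun h => x.2 (Subtype.ext h)), by
            show ((Units.mk0 (x : F) _ : Fˣ) : F) ∈ K
            simpa using (x : ↥K).2⟩
          left_inv := fun u => by
            apply Subtype.ext; apply Units.ext; rfl
          right_inv := fun x => by
            apply Subtype.ext; apply Subtype.ext; rfl }
      rw [Nat.card_congr (e1.trans unitsEquivNeZero.symm), Nat.card_units, hK]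
    haveI : IsCyclic (Fˣ ⧸ Ksub) := isCyclic_of_surjective _ (QuotientGroup.mk'_surjective Ksub)
    have hcardQ : Nat.card (Fˣ ⧸ Ksub) = p ^ 2 + p + 1 := by
      have hlag := Subgroup.card_eq_card_quotient_mul_card_subgroup Ksub
      have hcardU : Nat.card Fˣ = p ^ 3 - 1 := by rw [Nat.card_units, hF]
      have hident : (p ^ 2 + p + 1) * (p - 1) = p ^ 3 - 1 := by
        obtain ⟨m, hm⟩ : ∃ m, p = m + 1 := ⟨p - 1, by omega⟩
        subst hm
        have key : ((m+1)^2+(m+1)+1) * m + 1 = (m+1)^3 := by ring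
        simp only [Nat.add_sub_cancel]
        omega
      rw [hcardU, hcardKsub, ← hident] at hlag
      have hppos : 0 < p - 1 := by omega
      have := Nat.eq_of_mul_eq_mul_right hppos hlag.symm
      omega
    have e : (Fˣ ⧸ Ksub) ≃* Multiplicative (ZMod (p ^ 2 + p + 1)) := by
      refine mulEquivOfCyclicCardEq ?_
      rw [hcardQ, Nat.card_eq_fintype_card]
      simp [ZMod.card]
    refine ⟨e.toMonoidHom.comp (QuotientGroup.mk' Ksub),
      e.surjective.comp (QuotientGroup.mk'_surjective Ksub), ?_⟩
    intro u
    rw [MonoidHom.comp_apply, MulEquiv.coe_toMonoidHom, map_eq_one_iff _ e.injective]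
    show QuotientGroup.mk' Ksub u = 1 ↔ _
    rw [QuotientGroup.mk'_apply, QuotientGroup.eq_one_iff]
    exact hKsubMem u
  have hdiff : ∀ u v : Fˣ, π u = π v ↔ ((u * v⁻¹ : Fˣ) : F) ∈ K := by
    intro u v
    rw [← hker, map_mul, map_inv]
    constructor
    · intro h; rw [h]; simp
    · intro h
      have : π u * (π v)⁻¹ * π v = 1 * π v := by rw [h]
      simpa using this
  -- ### the line L
  obtain ⟨L, hL2⟩ : ∃ L : Submodule K F, Module.finrank K ↥L = 2 := by
    have b : Module.Basis (Fin 3) ↥K F := Module.finBasisOfFinrankEq ↥K F hdim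
    refine ⟨Submodule.span K (Set.range (⇑b ∘ Fin.castLE (by omega : 2 ≤ 3))), ?_⟩
    rw [finrank_span_eq_card
      (b.linearIndependent.comp (Fin.castLE (by omega : 2 ≤ 3)) (Fin.castLE_injective _))]
    simp
  have hLcoset : ∀ u v : Fˣ, π u = π v → ((u : F) ∈ L → (v : F) ∈ L) := by
    intro u v huv hu
    have h1 : ((v * u⁻¹ : Fˣ) : F) ∈ K := (hdiff v u).mp huv.symm
    have h2 : (⟨_, h1⟩ : ↥K) • (u : F) ∈ L := L.smul_mem _ hu
    have h3 : ((v * u⁻¹ : Fˣ) : F) * (u : F) = (v : F) := by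
      rw [← Units.val_mul, inv_mul_cancel_right]
    rwa [show (⟨_, h1⟩ : ↥K) • (u : F) = ((v * u⁻¹ : Fˣ) : F) * (u : F) from rfl, h3] at h2
  -- ### the difference set A
  obtain ⟨A, hAmem⟩ : ∃ A : Finset (ZMod (p ^ 2 + p + 1)), ∀ a : ZMod (p ^ 2 + p + 1),
      a ∈ A ↔ ∃ u : Fˣ, (u : F) ∈ L ∧ Multiplicative.toAdd (π u) = a := by
    refine ⟨(Finset.univ.filter fun u : Fˣ => (u : F) ∈ L).image
      (fun u => Multiplicative.toAdd (π u)), ?_⟩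
    intro a
    simp
  refine ⟨A, ?_⟩
  intro n hn
  obtain ⟨c, hcπ⟩ := hπsurj (Multiplicative.ofAdd n)
  -- ### the translated line Lc
  obtain ⟨Lc, hLcmem, hLc2⟩ : ∃ Lc : Submodule K F,
      (∀ x : F, x ∈ Lc ↔ (c : F) * x ∈ L) ∧ Module.finrank K ↥Lc = 2 := by
    set μ : F ≃ₗ[K] F := LinearEquiv.ofLinear
      (LinearMap.mulLeft ↥K ((c : F)))
      (LinearMap.mulLeft ↥K (((c⁻¹ : Fˣ) : F)))
      (by ext x
          simp only [Module.End.mul_apply, LinearMap.coe_comp, Function.comp_apply,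
            LinearMap.mulLeft_apply, LinearMap.id_coe, id_eq]
          rw [← mul_assoc, ← Units.val_mul, mul_inv_cancel, Units.val_one, one_mul])
      (by ext x
          simp only [Module.End.mul_apply, LinearMap.coe_comp, Function.comp_apply,
            LinearMap.mulLeft_apply, LinearMap.id_coe, id_eq]
          rw [← mul_assoc, ← Units.val_mul, inv_mul_cancel, Units.val_one, one_mul]) with hμdef
    have hμ : ∀ x : F, μ x = (c : F) * x := fun x => rfl
    refine ⟨L.comap (μ : F →ₗ[K] F), fun x => ?_, ?_⟩
    · exact Iff.rfl
    · rw [Submodule.comap_equiv_eq_map_symm, LinearEquiv.finrank_map_eq, hL2]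
  have hstabC : ¬ L ≤ Lc := by
    intro hle
    have heq : L = Lc := Submodule.eq_of_le_of_finrank_le hle (by rw [hLc2, hL2])
    have hcK : (c : F) ∈ K := by
      refine stab p hp2 F K hK hdim L hL2 (c : F) ?_
      intro x hx
      exact (hLcmem x).mp (heq ▸ hx)
    have h1 : π c = 1 := (hker c).mpr hcK
    rw [hcπ] at h1
    exact hn (by simpa using congrArg Multiplicative.toAdd h1)
  have hWle1 : Module.finrank K ↥(L ⊓ Lc) ≤ 1 := by
    by_contra h
    have hWL : L ⊓ Lc = L :=
      Submodule.eq_of_le_of_finrank_le inf_le_left (by rw [hL2]; omega)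
    exact hstabC (hWL ▸ (inf_le_right : L ⊓ Lc ≤ Lc))
  have hWge1 : 1 ≤ Module.finrank K ↥(L ⊓ Lc) := by
    have hsum := Submodule.finrank_sup_add_finrank_inf_eq L Lc
    have hsup : Module.finrank K ↥(L ⊔ Lc) ≤ 3 := by
      rw [← hdim]; exact Submodule.finrank_le _
    rw [hL2, hLc2] at hsum
    omega
  obtain ⟨u₀, hu₀W, hu₀ne⟩ : ∃ u₀ ∈ L ⊓ Lc, u₀ ≠ 0 := by
    rw [← Submodule.ne_bot_iff]
    intro h
    rw [h, finrank_bot] at hWge1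
    omega
  have hWspan : Submodule.span ↥K {u₀} = L ⊓ Lc := by
    apply Submodule.eq_of_le_of_finrank_le
    · rw [Submodule.span_singleton_le_iff_mem]; exact hu₀W
    · rw [finrank_span_singleton hu₀ne]; exact hWle1
  set w₀ : Fˣ := Units.mk0 u₀ hu₀ne with hw₀
  have hu₀W2 := Submodule.mem_inf.mp hu₀W
  have hu₀L : ((w₀ : Fˣ) : F) ∈ L := hu₀W2.1
  have hcu₀L : ((c * w₀ : Fˣ) : F) ∈ L := by
    rw [Units.val_mul]
    exact (hLcmem u₀).mp hu₀W2.2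
  set a' : ZMod (p ^ 2 + p + 1) := Multiplicative.toAdd (π w₀) with ha'
  have ha'A : a' ∈ A := (hAmem a').mpr ⟨w₀, hu₀L, rfl⟩
  have hπc : ∀ v : Fˣ, Multiplicative.toAdd (π (c * v)) = n + Multiplicative.toAdd (π v) := by
    intro v
    rw [map_mul, hcπ]
    rfl
  have haA : n + a' ∈ A := (hAmem _).mpr ⟨c * w₀, hcu₀L, hπc w₀⟩
  -- uniqueness
  have hkey : ∀ v : Fˣ, (v : F) ∈ L → ((c * v : Fˣ) : F) ∈ L → π v = π w₀ := by
    intro v hv hcv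
    have hvW : (v : F) ∈ L ⊓ Lc := by
      rw [Submodule.mem_inf]
      refine ⟨hv, ?_⟩
      rw [hLcmem]
      rw [Units.val_mul] at hcv
      exact hcv
    rw [← hWspan] at hvW
    obtain ⟨t, ht⟩ := Submodule.mem_span_singleton.mp hvW
    refine (hdiff v w₀).mpr ?_
    have hmain : ((v * w₀⁻¹ : Fˣ) : F) = (t : F) := by
      rw [Units.val_mul, Units.val_inv_eq_inv_val, ← ht]
      show ((t : F) * u₀) * (w₀ : F)⁻¹ = (t : F)
      rw [show ((w₀ : Fˣ) : F) = u₀ from rfl, mul_inv_cancel_right₀ hu₀ne]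
    rw [hmain]
    exact t.2
  -- ### final count
  show ((A ×ˢ (A.image fun a => -a)).filter fun z => z.1 + z.2 = n).card = 1
  rw [Finset.card_eq_one]
  refine ⟨(n + a', -a'), ?_⟩
  ext ⟨x, y⟩
  simp only [Finset.mem_filter, Finset.mem_product, Finset.mem_singleton, Finset.mem_image,
    Prod.mk.injEq]
  constructor
  · rintro ⟨⟨hxA, ⟨a'', ha''A, hya''⟩⟩, hxy⟩
    obtain ⟨u, huL, hu⟩ := (hAmem x).mp hxA
    obtain ⟨v, hvL, hv⟩ := (hAmem a'').mp ha''A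
    have hx : x = n + a'' := by
      rw [← hya''] at hxy
      rw [← hxy]; ring
    have hπu : π u = π (c * v) := by
      apply Multiplicative.toAdd.injective
      rw [hπc v, hu, hv, hx]
    have hcvL : ((c * v : Fˣ) : F) ∈ L := hLcoset u (c * v) hπu huL
    have hveq : π v = π w₀ := hkey v hvL hcvL
    have ha''a' : a'' = a' := by rw [← hv, ha', hveq]
    constructor
    · rw [hx, ha''a']
    · rw [← hya'', ha''a']
  · rintro ⟨hx, hy⟩
    subst hx
    subst hy
    refine ⟨⟨haA, ⟨a', ha'A, rfl⟩⟩, ?_⟩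
    exact add_neg_cancel_right n a'

end Auxiliary

theorem stmt_19 (p : ℕ) (hp : IsPrimePow p) :
    ∃ A : Finset (ZMod (p ^ 2 + p + 1)),
      ∀ n : ZMod (p ^ 2 + p + 1), n ≠ 0 →
        repFn2 A (A.image fun a => -a) n = 1 := by
  obtain ⟨F, _i1, _i2, K, hF, hK⟩ := exists_field_tower p hp
  exact singer p hp.two_le F K hF hK
end
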